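/- For every integer t ≥ 2 there exists a constant c > 0 such that for every even integer n ≥ 2t there exists a simple graph G on n vertices with θ_t(G) ≥ c·(log n)·θ*_t(G). In fact, the complete multipartite graph G with n/2 parts each of size 2 satisfies θ*_t(G) = 2^t and θ_t(G) > ⌊log₂(n/t)⌋. -/

import Mathlib

open scoped Classical
open Finset

/-- `K` is a clique of `G`: a nonempty set of pairwise adjacent vertices. -/
def IsCliqueOf {V : Type} [Fintype V] [DecidableEq V] (G : SimpleGraph V) (K : Finset V) : Prop :=
  K.Nonempty ∧ G.IsClique (K : Set V)

/-- Total `c`-cost of a weighting `f` of the finsets of vertices. -/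
noncomputable def cliqueCost {V : Type} [Fintype V] [DecidableEq V]
    (c : ℕ → ℝ) (f : Finset V → ℝ) : ℝ :=
  ∑ K : Finset V, c K.card * f K

/-- `f` is a fractional `t`-clique cover of `G`. -/
def IsFracCover {V : Type} [Fintype V] [DecidableEq V]
    (t : ℕ) (G : SimpleGraph V) (f : Finset V → ℝ) : Prop :=
  (∀ K, 0 ≤ f K) ∧ (∀ K, ¬ IsCliqueOf G K → f K = 0) ∧
  ∀ T : Finset V, T.card = t → G.IsClique (T : Set V) →
    1 ≤ ∑ K ∈ Finset.univ.filter (fun K => T ⊆ K), f K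

/-- `f` is a fractional `t`-clique decomposition of `G`. -/
def IsFracDecomp {V : Type} [Fintype V] [DecidableEq V]
    (t : ℕ) (G : SimpleGraph V) (f : Finset V → ℝ) : Prop :=
  (∀ K, 0 ≤ f K) ∧ (∀ K, ¬ IsCliqueOf G K → f K = 0) ∧
  ∀ T : Finset V, T.card = t → G.IsClique (T : Set V) →
    ∑ K ∈ Finset.univ.filter (fun K => T ⊆ K), f K = 1

/-- `f` is an integer (`{0,1}`-valued) `t`-clique cover of `G`. -/
def IsIntCover {V : Type} [Fintype V] [DecidableEq V]
    (t : ℕ) (G : SimpleGraph V) (f : Finset V → ℝ) : Prop :=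
  IsFracCover t G f ∧ ∀ K, f K = 0 ∨ f K = 1

/-- `f` is an integer (`{0,1}`-valued) `t`-clique decomposition of `G`. -/
def IsIntDecomp {V : Type} [Fintype V] [DecidableEq V]
    (t : ℕ) (G : SimpleGraph V) (f : Finset V → ℝ) : Prop :=
  IsFracDecomp t G f ∧ ∀ K, f K = 0 ∨ f K = 1

/-- θ*_t(G,c): minimum total c-cost of a fractional t-clique cover. -/
noncomputable def thetaFrac {V : Type} [Fintype V] [DecidableEq V]
    (t : ℕ) (G : SimpleGraph V) (c : ℕ → ℝ) : ℝ :=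
  sInf { x | ∃ f, IsFracCover t G f ∧ x = cliqueCost c f }

/-- θ_t(G,c): minimum total c-cost of an integer t-clique cover. -/
noncomputable def thetaInt {V : Type} [Fintype V] [DecidableEq V]
    (t : ℕ) (G : SimpleGraph V) (c : ℕ → ℝ) : ℝ :=
  sInf { x | ∃ f, IsIntCover t G f ∧ x = cliqueCost c f }

/-- π*_t(G,c): minimum total c-cost of a fractional t-clique decomposition. -/
noncomputable def piFrac {V : Type} [Fintype V] [DecidableEq V]
    (t : ℕ) (G : SimpleGraph V) (c : ℕ → ℝ) : ℝ :=
  sInf { x | ∃ f, IsFracDecomp t G f ∧ x = cliqueCost c f }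

/-- π_t(G,c): minimum total c-cost of an integer t-clique decomposition. -/
noncomputable def piInt {V : Type} [Fintype V] [DecidableEq V]
    (t : ℕ) (G : SimpleGraph V) (c : ℕ → ℝ) : ℝ :=
  sInf { x | ∃ f, IsIntDecomp t G f ∧ x = cliqueCost c f }

/-- `G` is complete multipartite: vertices can be assigned to parts so that
adjacency holds exactly between distinct parts. -/
def IsCompleteMultipartite {V : Type} [Fintype V] [DecidableEq V]
    (G : SimpleGraph V) : Prop :=
  ∃ p : V → ℕ, ∀ u v, G.Adj u v ↔ p u ≠ p v

/-- The complete multipartite graph on `Fin n` (for even `n`) whose parts are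
the `n/2` consecutive pairs `{2k, 2k+1}`. -/
def pairGraph (n : ℕ) : SimpleGraph (Fin n) where
  Adj u v := (u : ℕ) / 2 ≠ (v : ℕ) / 2
  symm := ⟨fun _ _ h => Ne.symm h⟩
  loopless := ⟨fun _ h => h rfl⟩

lemma toNat_le_one (b : Bool) : b.toNat ≤ 1 := by cases b <;> simp

noncomputable def TaSet (n t : ℕ) (a : ℕ → Bool) : Finset (Fin n) :=
  Finset.univ.filter (fun v => v.val < 2*t ∧ v.val % 2 = (a (v.val/2)).toNat)

lemma mem_TaSet {n t : ℕ} {a : ℕ → Bool} {v : Fin n} :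
    v ∈ TaSet n t a ↔ v.val < 2*t ∧ v.val % 2 = (a (v.val/2)).toNat := by
  simp [TaSet]

lemma TaSet_clique (n t : ℕ) (a : ℕ → Bool) :
    (pairGraph n).IsClique (TaSet n t a : Set (Fin n)) := by
  intro v hv w hw hne
  rw [Finset.mem_coe, mem_TaSet] at hv hw
  show (v : ℕ) / 2 ≠ (w : ℕ) / 2
  intro hdiv
  rw [hdiv] at hv
  have h2 : v.val % 2 = w.val % 2 := hv.2.trans hw.2.symm
  exact hne (Fin.ext (by omega))

lemma card_TaSet {n t : ℕ} (h2t : 2*t ≤ n) (a : ℕ → Bool) : (TaSet n t a).card = t := by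
  have hg : ∀ j : Fin t, 2*j.val + (a j.val).toNat < n := fun j => by
    have h1 := j.isLt; have h2 := toNat_le_one (a j.val); omega
  set g : Fin t → Fin n := fun j => ⟨2*j.val + (a j.val).toNat, hg j⟩ with hgdef
  have hval : ∀ j : Fin t, (g j).val = 2*j.val + (a j.val).toNat := fun j => rfl
  have himg : TaSet n t a = Finset.image g Finset.univ := by
    ext v
    simp only [mem_TaSet, Finset.mem_image, Finset.mem_univ, true_and]
    constructor
    · rintro ⟨h1, h2⟩
      have hj : v.val / 2 < t := by omega
      refine ⟨⟨v.val/2, hj⟩, ?_⟩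
      apply Fin.ext
      rw [hval]
      have := toNat_le_one (a (v.val/2))
      simp only
      omega
    · rintro ⟨j, rfl⟩
      have h1 := toNat_le_one (a j.val)
      have h2 := j.isLt
      rw [hval]
      have hd : (2*j.val + (a j.val).toNat)/2 = j.val := by omega
      rw [hd]
      constructor
      · omega
      · omega
  rw [himg, Finset.card_image_of_injective _ ?_, Finset.card_univ, Fintype.card_fin]
  intro j j' hjj
  have h := congrArg Fin.val hjj
  rw [hval, hval] at h
  have h1 := toNat_le_one (a j.val)
  have h2 := toNat_le_one (a j'.val)
  exact Fin.ext (by omega)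

lemma toNat_inj {b b' : Bool} (h : b.toNat = b'.toNat) : b = b' := by
  cases b <;> cases b' <;> simp_all

lemma TaSet_subset_eq {n t : ℕ} {a b : ℕ → Bool} {K : Finset (Fin n)} (h2t : 2*t ≤ n)
    (hK : (pairGraph n).IsClique (K : Set (Fin n))) (ha : TaSet n t a ⊆ K)
    (hb : TaSet n t b ⊆ K) {j : ℕ} (hj : j < t) : a j = b j := by
  by_contra hne
  have h1 := toNat_le_one (a j)
  have h2 := toNat_le_one (b j)
  have hlt1 : 2*j + (a j).toNat < n := by omega
  have hlt2 : 2*j + (b j).toNat < n := by omega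
  have hvmem : (⟨2*j+(a j).toNat, hlt1⟩ : Fin n) ∈ TaSet n t a := by
    rw [mem_TaSet]
    show 2*j+(a j).toNat < 2*t ∧ (2*j+(a j).toNat) % 2 = (a ((2*j+(a j).toNat)/2)).toNat
    have hda : (2*j+(a j).toNat)/2 = j := by omega
    rw [hda]
    omega
  have hwmem : (⟨2*j+(b j).toNat, hlt2⟩ : Fin n) ∈ TaSet n t b := by
    rw [mem_TaSet]
    show 2*j+(b j).toNat < 2*t ∧ (2*j+(b j).toNat) % 2 = (b ((2*j+(b j).toNat)/2)).toNat
    have hdb : (2*j+(b j).toNat)/2 = j := by omega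
    rw [hdb]
    omega
  have htn : (a j).toNat ≠ (b j).toNat := fun h => hne (toNat_inj h)
  have hvw : (⟨2*j+(a j).toNat, hlt1⟩ : Fin n) ≠ ⟨2*j+(b j).toNat, hlt2⟩ := by
    intro h
    have h3 : 2*j+(a j).toNat = 2*j+(b j).toNat := congrArg Fin.val h
    exact htn (by omega)
  have hadj := hK (Finset.mem_coe.mpr (ha hvmem)) (Finset.mem_coe.mpr (hb hwmem)) hvw
  exact hadj (by show (2*j+(a j).toNat)/2 = (2*j+(b j).toNat)/2; omega)

lemma fracCover_lower {n t : ℕ} (ht : 2 ≤ t) (h2t : 2*t ≤ n) {f : Finset (Fin n) → ℝ}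
    (hf : IsFracCover t (pairGraph n) f) : (2:ℝ)^t ≤ cliqueCost (fun _ => 1) f := by
  obtain ⟨hpos, hzero, hcov⟩ := hf
  have hcost : cliqueCost (fun _ => 1) f = ∑ K : Finset (Fin n), f K := by
    simp [cliqueCost]
  set ext : (Fin t → Bool) → (ℕ → Bool) := fun a m => if h : m < t then a ⟨m,h⟩ else false
      with hext
  calc (2:ℝ)^t = ∑ _a : Fin t → Bool, (1:ℝ) := by
        rw [Finset.sum_const, Finset.card_univ, Fintype.card_fun, Fintype.card_bool,
          Fintype.card_fin, nsmul_eq_mul, mul_one]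
        push_cast
        ring
    _ ≤ ∑ a : Fin t → Bool,
          ∑ K ∈ Finset.univ.filter (fun K => TaSet n t (ext a) ⊆ K), f K := by
        refine Finset.sum_le_sum fun a _ => ?_
        exact hcov _ (card_TaSet h2t _) (TaSet_clique n t _)
    _ = ∑ a : Fin t → Bool, ∑ K : Finset (Fin n),
          if TaSet n t (ext a) ⊆ K then f K else 0 := by
        simp [Finset.sum_filter]
    _ = ∑ K : Finset (Fin n), ∑ a : Fin t → Bool,
          if TaSet n t (ext a) ⊆ K then f K else 0 := Finset.sum_comm
    _ ≤ ∑ K : Finset (Fin n), f K := by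
        refine Finset.sum_le_sum fun K _ => ?_
        by_cases hK0 : f K = 0
        · simp [hK0]
        · have hKc : (pairGraph n).IsClique (K : Set (Fin n)) := by
            by_contra h
            exact hK0 (hzero K (fun hc => h hc.2))
          rw [Finset.sum_ite, Finset.sum_const_zero, add_zero, Finset.sum_const]
          have hc1 : (Finset.univ.filter
              (fun a : Fin t → Bool => TaSet n t (ext a) ⊆ K)).card ≤ 1 := by
            rw [Finset.card_le_one]
            intro a ha b hb
            simp only [Finset.mem_filter] at ha hb
            funext j
            have hjt := j.isLt
            have := TaSet_subset_eq h2t hKc ha.2 hb.2 hjt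
            simpa [hext, hjt] using this
          rcases Nat.le_one_iff_eq_zero_or_eq_one.mp hc1 with h|h <;> simp [h, hpos K]
    _ = cliqueCost (fun _ => 1) f := hcost.symm

noncomputable def transSet (n : ℕ) (b : ℕ → Bool) : Finset (Fin n) :=
  Finset.univ.filter (fun v => v.val % 2 = (b (v.val/2)).toNat)

lemma mem_transSet {n : ℕ} {b : ℕ → Bool} {v : Fin n} :
    v ∈ transSet n b ↔ v.val % 2 = (b (v.val/2)).toNat := by
  simp [transSet]

lemma transSet_clique (n : ℕ) (b : ℕ → Bool) :
    (pairGraph n).IsClique (transSet n b : Set (Fin n)) := by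
  intro v hv w hw hne
  rw [Finset.mem_coe, mem_transSet] at hv hw
  show (v : ℕ) / 2 ≠ (w : ℕ) / 2
  intro hdiv
  rw [hdiv] at hv
  have h2 : v.val % 2 = w.val % 2 := hv.trans hw.symm
  exact hne (Fin.ext (by omega))

lemma exists_frac_cover {n t : ℕ} (ht : 2 ≤ t) (h2t : 2*t ≤ n) (hev : Even n) :
    ∃ f, IsFracCover t (pairGraph n) f ∧ cliqueCost (fun _ => 1) f = 2^t := by
  obtain ⟨m, hm⟩ := hev
  have hN : 2*(n/2) = n := by omega
  set N := n/2 with hNdef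
  have htN : t ≤ N := by omega
  have hNpos : 0 < N := by omega
  set ext : (Fin N → Bool) → (ℕ → Bool) :=
    fun a m => if h : m < N then a ⟨m,h⟩ else false with hext
  set tb : (Fin N → Bool) → Finset (Fin n) := fun a => transSet n (ext a) with htb
  -- injectivity
  have hinj : Function.Injective tb := by
    intro a a' h
    funext k
    by_contra hk
    have h1 := toNat_le_one (a k)
    have hklt := k.isLt
    have hlt : 2*k.val + (a k).toNat < n := by omega
    have hd : (2*k.val+(a k).toNat)/2 = k.val := by omega
    have hextk : ext a k.val = a k := by
      rw [hext]
      simp [hklt]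
    have hextk' : ext a' k.val = a' k := by
      rw [hext]
      simp [hklt]
    have hv : (⟨2*k.val+(a k).toNat, hlt⟩ : Fin n) ∈ tb a := by
      rw [htb]
      rw [mem_transSet]
      show (2*k.val+(a k).toNat) % 2 = (ext a ((2*k.val+(a k).toNat)/2)).toNat
      rw [hd, hextk]
      omega
    have hv' : (⟨2*k.val+(a k).toNat, hlt⟩ : Fin n) ∈ tb a' := h ▸ hv
    rw [htb, mem_transSet] at hv'
    have hv'2 : (2*k.val+(a k).toNat) % 2 = (ext a' ((2*k.val+(a k).toNat)/2)).toNat := hv'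
    rw [hd, hextk'] at hv'2
    have h2 := toNat_le_one (a' k)
    exact hk (toNat_inj (by omega))
  -- clique-of
  have hcliqueOf : ∀ a : Fin N → Bool, IsCliqueOf (pairGraph n) (tb a) := by
    intro a
    have h1 := toNat_le_one (ext a 0)
    have hlt : (ext a 0).toNat < n := by omega
    refine ⟨⟨⟨(ext a 0).toNat, hlt⟩, ?_⟩, transSet_clique n _⟩
    rw [htb, mem_transSet]
    show (ext a 0).toNat % 2 = (ext a ((ext a 0).toNat / 2)).toNat
    have hd : (ext a 0).toNat / 2 = 0 := by omega
    rw [hd]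
    omega
  set I : Finset (Finset (Fin n)) := Finset.image tb Finset.univ with hI
  set w : ℝ := (2:ℝ)^t / 2^N with hwdef
  have hw : 0 < w := by positivity
  set f : Finset (Fin n) → ℝ := fun K => if K ∈ I then w else 0 with hf
  have hIcard : I.card = 2^N := by
    rw [hI, Finset.card_image_of_injective _ hinj, Finset.card_univ, Fintype.card_fun,
      Fintype.card_bool, Fintype.card_fin]
  have hcost : cliqueCost (fun _ => 1) f = 2^t := by
    simp only [cliqueCost, one_mul, hf]
    rw [Finset.sum_ite_mem, Finset.univ_inter, Finset.sum_const, hIcard, nsmul_eq_mul, hwdef]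
    push_cast
    field_simp
  refine ⟨f, ⟨?_, ?_, ?_⟩, hcost⟩
  · intro K
    rw [hf]
    dsimp only
    split
    · exact hw.le
    · exact le_refl 0
  · intro K hK
    rw [hf]
    dsimp only
    rw [if_neg]
    intro hKI
    obtain ⟨a, _, rfl⟩ := Finset.mem_image.mp hKI
    exact hK (hcliqueOf a)
  · intro T hTcard hTclique
    have hvN : ∀ v : Fin n, v.val/2 < N := fun v => by have := v.isLt; omega
    set pt : Fin n → Fin N := fun v => ⟨v.val/2, hvN v⟩ with hpt
    have hptinj : Set.InjOn pt (T : Set (Fin n)) := by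
      intro v hv u hu hvu
      by_contra hne
      have hadj := hTclique hv hu hne
      exact hadj (congrArg Fin.val hvu)
    set P : Finset (Fin N) := T.image pt with hP
    have hPcard : P.card = t := by
      rw [hP, Finset.card_image_of_injOn hptinj, hTcard]
    set bit : Fin n → Bool := fun v => decide (v.val % 2 = 1) with hbit
    set φ : (Fin N → Bool) → (Fin N → Bool) :=
      fun g k => if h : ∃ v ∈ T, pt v = k then bit h.choose else g k with hφ
    have hφT : ∀ g, T ⊆ tb (φ g) := by
      intro g v hv
      rw [htb, mem_transSet]
      show v.val % 2 = (ext (φ g) (v.val/2)).toNat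
      have hvd := hvN v
      rw [hext]
      simp only [hvd, dif_pos]
      have hex : ∃ u ∈ T, pt u = pt v := ⟨v, hv, rfl⟩
      have hfg : φ g (pt v) = bit hex.choose := by
        rw [hφ]
        exact dif_pos hex
      have hpv : (⟨v.val/2, hvd⟩ : Fin N) = pt v := rfl
      rw [hpv, hfg]
      obtain ⟨hu1, hu2⟩ := hex.choose_spec
      have hcv : hex.choose = v := hptinj hu1 hv hu2
      rw [hcv, hbit]
      rcases Nat.mod_two_eq_zero_or_one v.val with h|h <;> simp [h]
    have hfiber : ∀ b ∈ Finset.image φ Finset.univ,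
        (Finset.univ.filter (fun g => φ g = b)).card ≤ 2^t := by
      intro b _
      have hle : (Finset.univ.filter (fun g => φ g = b)).card
          ≤ (Finset.univ : Finset ({x // x ∈ P} → Bool)).card := by
        apply Finset.card_le_card_of_injOn (fun g => fun k => g k.1)
        · intro g _
          exact Finset.mem_univ _
        · intro g hg g' hg' hres
          simp only [Finset.coe_filter, Set.mem_setOf_eq, Finset.mem_univ, true_and] at hg hg'
          funext k
          by_cases hk : ∃ v ∈ T, pt v = k
          · have hkP : k ∈ P := by
              obtain ⟨v, hv, he⟩ := hk
              rw [hP]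
              exact Finset.mem_image.mpr ⟨v, hv, he⟩
            exact congrFun hres ⟨k, hkP⟩
          · have e1 : φ g k = g k := dif_neg hk
            have e2 : φ g' k = g' k := dif_neg hk
            rw [← e1, ← e2, hg, hg']
      rw [Finset.card_univ, Fintype.card_fun, Fintype.card_bool] at hle
      have hPt : Fintype.card {x // x ∈ P} = t := by
        rw [Fintype.card_coe, hPcard]
      calc (Finset.univ.filter (fun g => φ g = b)).card
          ≤ 2 ^ Fintype.card {x // x ∈ P} := hle
        _ = 2 ^ t := by rw [hPt]
    have hcount : (2:ℕ)^N ≤ 2^t *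
        (Finset.univ.filter (fun a : Fin N → Bool => T ⊆ tb a)).card := by
      have h1 : (Finset.univ : Finset (Fin N → Bool)).card
          ≤ 2^t * (Finset.image φ Finset.univ).card :=
        Finset.card_le_mul_card_image _ _ hfiber
      have h2 : Finset.image φ Finset.univ ⊆
          Finset.univ.filter (fun a => T ⊆ tb a) := by
        intro b hb
        obtain ⟨g, _, rfl⟩ := Finset.mem_image.mp hb
        exact Finset.mem_filter.mpr ⟨Finset.mem_univ _, hφT g⟩
      calc (2:ℕ)^N = (Finset.univ : Finset (Fin N → Bool)).card := by
            rw [Finset.card_univ, Fintype.card_fun, Fintype.card_bool, Fintype.card_fin]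
        _ ≤ 2^t * (Finset.image φ Finset.univ).card := h1
        _ ≤ _ := Nat.mul_le_mul_left _ (Finset.card_le_card h2)
    set B := Finset.univ.filter (fun a : Fin N → Bool => T ⊆ tb a) with hB
    have himg : Finset.image tb B ⊆ (Finset.univ.filter (fun K => T ⊆ K)) ∩ I := by
      intro K hK
      obtain ⟨a, haB, rfl⟩ := Finset.mem_image.mp hK
      refine Finset.mem_inter.mpr ⟨Finset.mem_filter.mpr ⟨Finset.mem_univ _,
        (Finset.mem_filter.mp haB).2⟩, ?_⟩
      rw [hI]
      exact Finset.mem_image.mpr ⟨a, Finset.mem_univ _, rfl⟩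
    have hsum : ∑ K ∈ Finset.univ.filter (fun K => T ⊆ K), f K
        = ((Finset.univ.filter (fun K => T ⊆ K)) ∩ I).card * w := by
      rw [hf]
      dsimp only
      rw [Finset.sum_ite_mem, Finset.sum_const, nsmul_eq_mul]
    have hBcard : B.card ≤ ((Finset.univ.filter (fun K => T ⊆ K)) ∩ I).card := by
      calc B.card = (Finset.image tb B).card := (Finset.card_image_of_injective _ hinj).symm
        _ ≤ _ := Finset.card_le_card himg
    have hc : (2:ℝ)^N ≤ 2^t * (((Finset.univ.filter (fun K => T ⊆ K)) ∩ I).card : ℝ) := by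
      have h3 : (2:ℕ)^N ≤ 2^t * ((Finset.univ.filter (fun K => T ⊆ K)) ∩ I).card :=
        le_trans hcount (Nat.mul_le_mul_left _ hBcard)
      exact_mod_cast h3
    rw [hsum, hwdef]
    rw [mul_div_assoc', le_div_iff₀ (by positivity), one_mul]
    nlinarith [hc]

lemma intcover_card {n t : ℕ} (ht : 2 ≤ t) (h2t : 2*t ≤ n) (hev : Even n)
    {S : Finset (Finset (Fin n))}
    (hS : ∀ K ∈ S, (pairGraph n).IsClique (K : Set (Fin n)))
    (hcov : ∀ T : Finset (Fin n), T.card = t → (pairGraph n).IsClique (T : Set (Fin n)) →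
      ∃ K ∈ S, T ⊆ K) :
    n / t < 2 ^ S.card := by
  obtain ⟨m, hm⟩ := hev
  have hN : 2*(n/2) = n := by omega
  set N := n/2 with hNdef
  have htN : t ≤ N := by omega
  have hod : ∀ k : Fin N, 2*k.val+1 < n := fun k => by have := k.isLt; omega
  have hevlt : ∀ k : Fin N, 2*k.val < n := fun k => by have := k.isLt; omega
  set od : Fin N → Fin n := fun k => ⟨2*k.val+1, hod k⟩ with hodd
  set evv : Fin N → Fin n := fun k => ⟨2*k.val, hevlt k⟩ with hevv
  have hvod : ∀ j : Fin N, (od j).val = 2*j.val+1 := fun j => rfl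
  have hvev : ∀ j : Fin N, (evv j).val = 2*j.val := fun j => rfl
  have hval : ∀ (k j : Fin N), ((if j = k then od j else evv j) : Fin n).val / 2 = j.val := by
    intro k j
    split
    · rw [hvod]; omega
    · rw [hvev]; omega
  have hmk : ∀ (P : Finset (Fin N)) (k : Fin N),
      ((P.image (fun j => if j = k then od j else evv j)).card = P.card) ∧
      (pairGraph n).IsClique
        ((P.image (fun j => if j = k then od j else evv j)) : Set (Fin n)) := by
    intro P k
    constructor
    · apply Finset.card_image_of_injOn
      intro j _ j' _ he
      have he' : (if j = k then od j else evv j) = (if j' = k then od j' else evv j') := he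
      apply Fin.ext
      rw [← hval k j, ← hval k j', he']
    · intro x hx y hy hne
      rw [Finset.mem_coe, Finset.mem_image] at hx hy
      obtain ⟨j, hjP, rfl⟩ := hx
      obtain ⟨j', hjP', rfl⟩ := hy
      show ((if j = k then od j else evv j) : Fin n).val / 2
        ≠ ((if j' = k then od j' else evv j') : Fin n).val / 2
      rw [hval k j, hval k j']
      intro h
      apply hne
      have hjj : j = j' := Fin.ext h
      rw [hjj]
  set vec : Fin N → ({K // K ∈ S} → Bool) := fun k K => decide (od k ∈ K.1) with hvec
  have hvec0 : ∀ k, vec k ≠ fun _ => false := by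
    intro k h0
    obtain ⟨P, hkP, _, hPcard⟩ := Finset.exists_subsuperset_card_eq (n := t)
      (Finset.subset_univ ({k} : Finset (Fin N)))
      (by rw [Finset.card_singleton]; omega)
      (by rw [Finset.card_univ, Fintype.card_fin]; exact htN)
    obtain ⟨hc, hcl⟩ := hmk P k
    obtain ⟨K, hKS, hTK⟩ := hcov _ (hc.trans hPcard) hcl
    have hkP' : k ∈ P := hkP (Finset.mem_singleton_self k)
    have hodT : od k ∈ P.image (fun j => if j = k then od j else evv j) :=
      Finset.mem_image.mpr ⟨k, hkP', by rw [if_pos rfl]⟩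
    have h1 : vec k ⟨K, hKS⟩ = true := decide_eq_true (hTK hodT)
    have h2 := congrFun h0 ⟨K, hKS⟩
    rw [h1] at h2
    simp at h2
  have hvecinj : Function.Injective vec := by
    intro k l hkl
    by_contra hne
    obtain ⟨P, hsub, _, hPcard⟩ := Finset.exists_subsuperset_card_eq (n := t)
      (Finset.subset_univ ({k, l} : Finset (Fin N)))
      (by
        rw [Finset.card_insert_of_notMem (by simpa using hne), Finset.card_singleton]
        exact ht)
      (by rw [Finset.card_univ, Fintype.card_fin]; exact htN)
    obtain ⟨hc, hcl⟩ := hmk P k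
    obtain ⟨K, hKS, hTK⟩ := hcov _ (hc.trans hPcard) hcl
    have hkP : k ∈ P := hsub (by simp)
    have hlP : l ∈ P := hsub (by simp)
    have hlk : l ≠ k := fun h => hne h.symm
    have hodk : od k ∈ K := hTK (Finset.mem_image.mpr ⟨k, hkP, by rw [if_pos rfl]⟩)
    have hevl : evv l ∈ K := hTK (Finset.mem_image.mpr ⟨l, hlP, by rw [if_neg hlk]⟩)
    have hodl : od l ∈ K := by
      have h1 : vec k ⟨K, hKS⟩ = true := decide_eq_true hodk
      have h2 : vec l ⟨K, hKS⟩ = true := by rw [← hkl]; exact h1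
      exact of_decide_eq_true h2
    have hne2 : od l ≠ evv l := by
      intro h
      have h3 : (od l).val = (evv l).val := congrArg Fin.val h
      rw [hvod, hvev] at h3
      omega
    have hadj := hS K hKS (Finset.mem_coe.mpr hodl) (Finset.mem_coe.mpr hevl) hne2
    apply hadj
    show (od l).val / 2 = (evv l).val / 2
    rw [hvod, hvev]
    omega
  have hNle : N < 2 ^ S.card := by
    have h1 : (Finset.univ.image vec).card = N := by
      rw [Finset.card_image_of_injective _ hvecinj, Finset.card_univ, Fintype.card_fin]
    have h2 : Finset.univ.image vec ⊆ Finset.univ.erase (fun _ => false) := by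
      intro g hg
      obtain ⟨k, _, rfl⟩ := Finset.mem_image.mp hg
      exact Finset.mem_erase.mpr ⟨hvec0 k, Finset.mem_univ _⟩
    have h3 := Finset.card_le_card h2
    rw [h1, Finset.card_erase_of_mem (Finset.mem_univ _), Finset.card_univ] at h3
    have h4 : Fintype.card ({K // K ∈ S} → Bool) = 2 ^ S.card := by
      rw [Fintype.card_fun, Fintype.card_bool, Fintype.card_coe]
    rw [h4] at h3
    have h5 : 0 < 2 ^ S.card := Nat.pow_pos (by norm_num)
    omega
  calc n / t ≤ n / 2 := Nat.div_le_div_left ht (by omega)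
    _ < 2 ^ S.card := hNle

/-- Proposition 5.2: the multiplicative integrality gap for `t`-clique covers is
`Ω(log n)`: the complete multipartite graph with `n/2` parts of size `2`
satisfies `θ*_t = 2ᵗ` and `θ_t > ⌊log₂(n/t)⌋`. -/
theorem stmt18 (t : ℕ) (ht : 2 ≤ t) :
    ∃ C : ℝ, 0 < C ∧ ∀ n : ℕ, Even n → 2 * t ≤ n →
      C * Real.log n * thetaFrac t (pairGraph n) (fun _ => 1) ≤
        thetaInt t (pairGraph n) (fun _ => 1) ∧
      thetaFrac t (pairGraph n) (fun _ => 1) = 2 ^ t ∧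
      (Nat.log 2 (n / t) : ℝ) < thetaInt t (pairGraph n) (fun _ => 1) := by
  have h2t' : (1:ℝ) < 2*(t:ℝ) := by
    have h1 : (2:ℝ) ≤ (t:ℝ) := by exact_mod_cast ht
    nlinarith
  have hD : 0 < Real.log (2*(t:ℝ)) + Real.log 2 := by
    have h1 : 0 < Real.log (2*(t:ℝ)) := Real.log_pos h2t'
    have h2 : 0 < Real.log 2 := Real.log_pos (by norm_num)
    linarith
  refine ⟨((2:ℝ)^t * (Real.log (2*(t:ℝ)) + Real.log 2))⁻¹, by positivity, ?_⟩
  intro n hev h2t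
  obtain ⟨f0, hf0, hc0⟩ := exists_frac_cover ht h2t hev
  have hfrac : thetaFrac t (pairGraph n) (fun _ => 1) = 2^t := by
    apply le_antisymm
    · apply csInf_le
      · refine ⟨(2:ℝ)^t, ?_⟩
        rintro x ⟨g, hg, rfl⟩
        exact fracCover_lower ht h2t hg
      · exact ⟨f0, hf0, hc0.symm⟩
    · refine le_csInf ⟨_, f0, hf0, hc0.symm⟩ ?_
      rintro x ⟨g, hg, rfl⟩
      exact fracCover_lower ht h2t hg
  set f1 : Finset (Fin n) → ℝ := fun K => if IsCliqueOf (pairGraph n) K then (1:ℝ) else 0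
    with hf1
  have hf1nn : ∀ K, (0:ℝ) ≤ f1 K := by
    intro K
    rw [hf1]
    dsimp only
    split <;> norm_num
  have hint1 : IsIntCover t (pairGraph n) f1 := by
    refine ⟨⟨hf1nn, ?_, ?_⟩, ?_⟩
    · intro K hK
      rw [hf1]
      dsimp only
      rw [if_neg hK]
    · intro T hT1 hT2
      have hTc : IsCliqueOf (pairGraph n) T := ⟨Finset.card_pos.mp (by omega), hT2⟩
      have hTmem : T ∈ Finset.univ.filter (fun K => T ⊆ K) :=
        Finset.mem_filter.mpr ⟨Finset.mem_univ _, Finset.Subset.refl _⟩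
      have hs := Finset.single_le_sum (f := f1) (fun K _ => hf1nn K) hTmem
      calc (1:ℝ) = f1 T := by rw [hf1]; dsimp only; rw [if_pos hTc]
        _ ≤ _ := hs
    · intro K
      rw [hf1]
      dsimp only
      split
      · right; rfl
      · left; rfl
  set L : ℕ := Nat.log 2 (n/t) + 1 with hLdef
  have hint_lb : ∀ x ∈ {x | ∃ f, IsIntCover t (pairGraph n) f ∧
      x = cliqueCost (fun _ => 1) f}, (L:ℝ) ≤ x := by
    rintro x ⟨f, ⟨⟨hpos, hzero, hcov⟩, hbool⟩, rfl⟩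
    set S := Finset.univ.filter (fun K : Finset (Fin n) => f K = 1) with hSdef
    have hcostS : cliqueCost (fun _ => 1) f = S.card := by
      simp only [cliqueCost, one_mul]
      calc ∑ K : Finset (Fin n), f K
          = ∑ K : Finset (Fin n), (if f K = 1 then (1:ℝ) else 0) := by
            refine Finset.sum_congr rfl fun K _ => ?_
            rcases hbool K with h|h <;> simp [h]
        _ = (S.card : ℝ) := by
            rw [← Finset.sum_filter, ← hSdef, Finset.sum_const, nsmul_eq_mul, mul_one]
    have hSclique : ∀ K ∈ S, (pairGraph n).IsClique (K : Set (Fin n)) := by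
      intro K hK
      by_contra h
      have h1 := hzero K (fun hc => h hc.2)
      have h2 := (Finset.mem_filter.mp hK).2
      rw [h1] at h2
      norm_num at h2
    have hScov : ∀ T : Finset (Fin n), T.card = t →
        (pairGraph n).IsClique (T : Set (Fin n)) → ∃ K ∈ S, T ⊆ K := by
      intro T h1 h2
      by_contra hno
      push_neg at hno
      have hge := hcov T h1 h2
      have hzero' : ∑ K ∈ Finset.univ.filter (fun K => T ⊆ K), f K = 0 := by
        apply Finset.sum_eq_zero
        intro K hK
        rcases hbool K with h|h
        · exact h
        · exact absurd (Finset.mem_filter.mp hK).2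
            (hno K (Finset.mem_filter.mpr ⟨Finset.mem_univ _, h⟩))
      rw [hzero'] at hge
      linarith
    have hlt := intcover_card ht h2t hev hSclique hScov
    have hLS : L ≤ S.card := by
      have hnt : n/t ≠ 0 := by
        have h1 : t ≤ n := by omega
        have h2 := (Nat.one_le_div_iff (show 0 < t by omega)).mpr h1
        omega
      have := Nat.log_lt_of_lt_pow hnt hlt
      omega
    rw [hcostS]
    exact_mod_cast hLS
  have hne : Set.Nonempty {x | ∃ f, IsIntCover t (pairGraph n) f ∧
      x = cliqueCost (fun _ => 1) f} :=
    ⟨cliqueCost (fun _ => 1) f1, f1, hint1, rfl⟩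
  have hint_ge : (L:ℝ) ≤ thetaInt t (pairGraph n) (fun _ => 1) := le_csInf hne hint_lb
  refine ⟨?_, hfrac, ?_⟩
  · rw [hfrac]
    have hnlt : n < t * 2^L := by
      have h1 : n/t < 2^L := Nat.lt_pow_succ_log_self (by norm_num) (n/t)
      have h2 : n < t * (n/t + 1) := Nat.lt_mul_div_succ n (show 0 < t by omega)
      calc n < t * (n/t+1) := h2
        _ ≤ t * 2^L := Nat.mul_le_mul_left _ (by omega)
    have hn0 : (0:ℝ) < n := by
      have h1 : 0 < n := by omega
      exact_mod_cast h1
    have hlogn : Real.log n ≤ L * (Real.log (2*(t:ℝ)) + Real.log 2) := by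
      have hle : (n:ℝ) ≤ (t:ℝ) * 2^L := by exact_mod_cast hnlt.le
      have h1 : Real.log n ≤ Real.log ((t:ℝ) * 2^L) := Real.log_le_log hn0 hle
      have ht0 : (0:ℝ) < (t:ℝ) := by
        have : 0 < t := by omega
        exact_mod_cast this
      have h2 : Real.log ((t:ℝ) * 2^L) = Real.log t + L * Real.log 2 := by
        rw [Real.log_mul ht0.ne' (by positivity), Real.log_pow]
      have h3 : Real.log (t:ℝ) ≤ Real.log (2*(t:ℝ)) :=
        Real.log_le_log ht0 (by linarith)
      have hL1 : (1:ℝ) ≤ (L:ℝ) := by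
        have : 1 ≤ L := by omega
        exact_mod_cast this
      have h4 : 0 ≤ Real.log (2*(t:ℝ)) := (Real.log_pos h2t').le
      have h5 : 0 ≤ Real.log 2 := Real.log_nonneg (by norm_num)
      nlinarith [h1, h2, h3]
    have h2t0 : (0:ℝ) < (2:ℝ)^t := by positivity
    have e : ((2:ℝ)^t * (Real.log (2*(t:ℝ)) + Real.log 2))⁻¹ * Real.log n * 2^t
        = Real.log n / (Real.log (2*(t:ℝ)) + Real.log 2) := by
      field_simp
    rw [e]
    have key : Real.log n / (Real.log (2*(t:ℝ)) + Real.log 2) ≤ (L:ℝ) := by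
      rw [div_le_iff₀ hD]
      linarith [hlogn]
    linarith [hint_ge, key]
  · have hLlt : (Nat.log 2 (n/t) : ℝ) < (L:ℝ) := by
      rw [hLdef]
      push_cast
      linarith
    linarith [hint_ge, hLlt]
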